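/- With f and g_a as in the address-function example (f(x_1,…,x_{d+1}) = Σ_{a∈{0,1}^d} g_a(x_1,…,x_d)·x_{d+1}(addr(a)), g_a = Π_b (x_b(1)+(−1)^{a_b}x_b(2))/2, n = 2^d), for every i = addr(a) ∈ [n] the influence of the variable x_{d+1}(i) on f equals 2^{−d}, and consequently Σ_{i=1}^n √(Inf_{d+1,i}(f)) = 2^{d/2}. -/

import Mathlib

noncomputable section
namespace AddrExample

/-- The real value of a ±1 bit encoded as a Boolean. -/
def bsign (b : Bool) : ℝ := if b then 1 else -1

/-- The integer in [2^d] whose binary expansion is `a`. -/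
def addr {d : ℕ} (a : Fin d → Bool) : Fin (2 ^ d) :=
  finFunctionFinEquiv (fun i => if a i then (1 : Fin 2) else 0)

/-- The factor polynomial g_a(x_1,…,x_d) = ∏_b (x_b(1) + (−1)^{a_b} x_b(2))/2. -/
def g {d : ℕ} (hd : 0 < d) (a : Fin d → Bool) (x : Fin (d + 1) → Fin (2 ^ d) → Bool) : ℝ :=
  ∏ b : Fin d,
    (bsign (x b.castSucc ⟨0, Nat.two_pow_pos d⟩) +
      (if a b then -1 else 1) * bsign (x b.castSucc ⟨1, Nat.one_lt_two_pow_iff.mpr (by omega)⟩)) / 2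

/-- The address-function block-multilinear form
f(x_1,…,x_{d+1}) = Σ_a g_a(x_1,…,x_d) · x_{d+1}(addr(a)). -/
def addrForm {d : ℕ} (hd : 0 < d) (x : Fin (d + 1) → Fin (2 ^ d) → Bool) : ℝ :=
  ∑ a : Fin d → Bool, g hd a x * bsign (x (Fin.last d) (addr a))


/-- Update the variable of the last (data) block at position `i` to value `v`. -/
def dupdate {d : ℕ} (x : Fin (d + 1) → Fin (2 ^ d) → Bool) (i : Fin (2 ^ d)) (v : Bool) :
    Fin (d + 1) → Fin (2 ^ d) → Bool :=
  Function.update x (Fin.last d) (Function.update (x (Fin.last d)) i v)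

/-- The influence of the data-block variable x_{d+1}(i) on the address form. -/
def dinf {d : ℕ} (hd : 0 < d) (i : Fin (2 ^ d)) : ℝ :=
  (∑ x : Fin (d + 1) → Fin (2 ^ d) → Bool,
      ((addrForm hd (dupdate x i true) - addrForm hd (dupdate x i false)) / 2) ^ 2) /
    2 ^ (2 ^ d * (d + 1))

-- auxiliary lemmas
abbrev X (d : ℕ) := Fin (d + 1) → Fin (2 ^ d) → Bool

def p0 (d : ℕ) : Fin (2 ^ d) := ⟨0, Nat.two_pow_pos d⟩
def p1 {d : ℕ} (hd : 0 < d) : Fin (2 ^ d) := ⟨1, Nat.one_lt_two_pow_iff.mpr (by omega)⟩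

lemma p0_ne_p1 {d : ℕ} (hd : 0 < d) : p0 d ≠ p1 hd := by
  simp [p0, p1, Fin.ext_iff]

def flip {d : ℕ} (j : Fin (d + 1)) (i : Fin (2 ^ d)) (x : X d) : X d :=
  Function.update x j (Function.update (x j) i (!x j i))

lemma flip_apply_ne_j {d : ℕ} {j j' : Fin (d + 1)} (h : j' ≠ j) (i : Fin (2 ^ d)) (x : X d) :
    flip j i x j' = x j' := by
  simp [flip, Function.update_of_ne h]

lemma flip_apply_ne_i {d : ℕ} (j : Fin (d + 1)) {i i' : Fin (2 ^ d)} (h : i' ≠ i) (x : X d) :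
    flip j i x j i' = x j i' := by
  simp [flip, Function.update_of_ne h]

lemma flip_apply_same {d : ℕ} (j : Fin (d + 1)) (i : Fin (2 ^ d)) (x : X d) :
    flip j i x j i = !x j i := by
  simp [flip]

lemma flip_involutive {d : ℕ} (j : Fin (d + 1)) (i : Fin (2 ^ d)) :
    Function.Involutive (flip j i) := by
  intro x
  funext j' i'
  rcases eq_or_ne j' j with rfl | hj
  · rcases eq_or_ne i' i with rfl | hi
    · rw [flip_apply_same, flip_apply_same]; simp
    · rw [flip_apply_ne_i _ hi, flip_apply_ne_i _ hi]
  · rw [flip_apply_ne_j hj, flip_apply_ne_j hj]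

lemma sum_ite_half {d : ℕ} (j : Fin (d + 1)) (i : Fin (2 ^ d)) (c : X d → Bool) (F : X d → ℝ)
    (hc : ∀ x, c (flip j i x) = c x) (hF : ∀ x, F (flip j i x) = F x) :
    ∑ x : X d, (if x j i = c x then F x else 0) = (∑ x : X d, F x) / 2 := by
  have hb := (flip_involutive j i).bijective
  have key : ∑ x : X d, (if x j i = c x then F x else 0)
      = ∑ x : X d, (if (!x j i) = c x then F x else 0) := by
    refine Fintype.sum_bijective (flip j i) hb _ _ ?_
    intro x
    rw [flip_apply_same, hc, hF]
    simp
  have h2 : ∑ x : X d, (if x j i = c x then F x else 0)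
      + ∑ x : X d, (if x j i = c x then F x else 0) = ∑ x : X d, F x := by
    nth_rewrite 2 [key]
    rw [← Finset.sum_add_distrib]
    refine Finset.sum_congr rfl fun x _ => ?_
    rcases Bool.eq_false_or_eq_true (x j i) with h | h <;>
      rcases Bool.eq_false_or_eq_true (c x) with h' | h' <;> simp [h, h']
  linarith

lemma card_X (d : ℕ) : Fintype.card (X d) = 2 ^ (2 ^ d * (d + 1)) := by
  simp [Fintype.card_fun, ← pow_mul, mul_comm]

lemma sum_prod_indicator {d : ℕ} (hd : 0 < d) (a : Fin d → Bool) (s : Finset (Fin d)) :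
    ∑ x : X d, ∏ b ∈ s,
        (if x b.castSucc (p0 d) = xor (a b) (x b.castSucc (p1 hd)) then (1 : ℝ) else 0)
      = (2 : ℝ) ^ (2 ^ d * (d + 1)) / 2 ^ s.card := by
  classical
  induction s using Finset.induction_on with
  | empty =>
      simp [Finset.sum_const, card_X]
      rw [← pow_mul]
  | insert b s hb ih =>
      rw [Finset.sum_congr rfl (fun x _ => Finset.prod_insert hb)]
      have : ∀ x : X d,
          (if x b.castSucc (p0 d) = xor (a b) (x b.castSucc (p1 hd)) then (1 : ℝ) else 0) *
            ∏ b' ∈ s, (if x b'.castSucc (p0 d) = xor (a b') (x b'.castSucc (p1 hd)) then (1 : ℝ) else 0)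
          = if x b.castSucc (p0 d) = (xor (a b) (x b.castSucc (p1 hd))) then
              (∏ b' ∈ s, (if x b'.castSucc (p0 d) = xor (a b') (x b'.castSucc (p1 hd)) then (1 : ℝ) else 0)) else 0 := by
        intro x; split <;> simp
      rw [Finset.sum_congr rfl (fun x _ => this x)]
      rw [sum_ite_half b.castSucc (p0 d) _ _ ?_ ?_]
      · rw [ih, Finset.card_insert_of_notMem hb]
        rw [pow_succ]
        ring
      · intro x
        rw [flip_apply_ne_i _ (Ne.symm (p0_ne_p1 hd))]
      · intro x
        refine Finset.prod_congr rfl fun b' hb' => ?_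
        have hne : b'.castSucc ≠ b.castSucc := by
          simp only [ne_eq, Fin.castSucc_inj]
          rintro rfl; exact hb hb'
        rw [flip_apply_ne_j hne]


lemma addr_injective {d : ℕ} : Function.Injective (addr (d := d)) := by
  intro a b h
  have h2 : (fun i => if a i then (1 : Fin 2) else 0) = (fun i => if b i then (1 : Fin 2) else 0) :=
    finFunctionFinEquiv.injective h
  funext i
  have := congrFun h2 i
  cases ha : a i <;> cases hb : b i <;> simp [ha, hb] at this ⊢

lemma addr_surjective {d : ℕ} : Function.Surjective (addr (d := d)) := by
  have : Fintype.card (Fin d → Bool) = Fintype.card (Fin (2 ^ d)) := by simp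
  exact ((Fintype.bijective_iff_injective_and_card _).mpr ⟨addr_injective, this⟩).2

lemma g_dupdate {d : ℕ} (hd : 0 < d) (a : Fin d → Bool) (x : X d) (i : Fin (2 ^ d)) (v : Bool) :
    g hd a (dupdate x i v) = g hd a x := by
  unfold g dupdate
  refine Finset.prod_congr rfl fun b _ => ?_
  have hne : b.castSucc ≠ Fin.last d := Fin.ne_of_lt (Fin.castSucc_lt_last b)
  rw [Function.update_of_ne hne]

lemma diff_eq {d : ℕ} (hd : 0 < d) (a₀ : Fin d → Bool) (x : X d) :
    (addrForm hd (dupdate x (addr a₀) true) - addrForm hd (dupdate x (addr a₀) false)) / 2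
      = g hd a₀ x := by
  unfold addrForm
  rw [← Finset.sum_sub_distrib]
  rw [Finset.sum_eq_single a₀]
  · rw [g_dupdate, g_dupdate]
    unfold dupdate
    rw [Function.update_self, Function.update_self, Function.update_self, Function.update_self]
    simp [bsign]
  · intro a _ hne
    rw [g_dupdate, g_dupdate]
    unfold dupdate
    rw [Function.update_self, Function.update_self]
    rw [Function.update_of_ne (fun h => hne (addr_injective h)),
        Function.update_of_ne (fun h => hne (addr_injective h))]
    ring
  · intro h; exact absurd (Finset.mem_univ a₀) h

lemma g_sq {d : ℕ} (hd : 0 < d) (a : Fin d → Bool) (x : X d) :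
    (g hd a x) ^ 2 = ∏ b : Fin d,
      (if x b.castSucc (p0 d) = xor (a b) (x b.castSucc (p1 hd)) then (1 : ℝ) else 0) := by
  unfold g
  rw [← Finset.prod_pow]
  refine Finset.prod_congr rfl fun b _ => ?_
  have e0 : (⟨0, Nat.two_pow_pos d⟩ : Fin (2 ^ d)) = p0 d := rfl
  have e1 : (⟨1, Nat.one_lt_two_pow_iff.mpr (by omega)⟩ : Fin (2 ^ d)) = p1 hd := rfl
  rw [e0, e1]
  cases ha : a b <;> cases h0 : x b.castSucc (p0 d) <;> cases h1 : x b.castSucc (p1 hd) <;>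
    norm_num [bsign]

lemma dinf_addr {d : ℕ} (hd : 0 < d) (a : Fin d → Bool) :
    dinf hd (addr a) = ((2 : ℝ) ^ d)⁻¹ := by
  unfold dinf
  have : ∀ x : X d,
      ((addrForm hd (dupdate x (addr a) true) - addrForm hd (dupdate x (addr a) false)) / 2) ^ 2
      = ∏ b : Fin d, (if x b.castSucc (p0 d) = xor (a b) (x b.castSucc (p1 hd)) then (1 : ℝ) else 0) := by
    intro x; rw [diff_eq hd a x, g_sq hd a x]
  rw [Finset.sum_congr rfl (fun x _ => this x)]
  rw [sum_prod_indicator hd a Finset.univ]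
  rw [Finset.card_fin]
  have h2 : (0 : ℝ) < 2 ^ (2 ^ d * (d + 1)) := by positivity
  field_simp

theorem stmt12 {d : ℕ} (hd : 0 < d) :
    (∀ a : Fin d → Bool, dinf hd (addr a) = ((2 : ℝ) ^ d)⁻¹) ∧
      ∑ i : Fin (2 ^ d), Real.sqrt (dinf hd i) = (2 : ℝ) ^ ((d : ℝ) / 2) := by
  have h1 : ∀ i : Fin (2 ^ d), dinf hd i = ((2 : ℝ) ^ d)⁻¹ := by
    intro i
    obtain ⟨a, rfl⟩ := addr_surjective i
    exact dinf_addr hd a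
  refine ⟨fun a => dinf_addr hd a, ?_⟩
  rw [Finset.sum_congr rfl (fun i _ => by rw [h1 i])]
  rw [Finset.sum_const, Finset.card_fin, nsmul_eq_mul]
  have htpos : (0 : ℝ) < (2 : ℝ) ^ ((d : ℝ) / 2) := Real.rpow_pos_of_pos (by norm_num) _
  have hsq : ((2 : ℝ) ^ ((d : ℝ) / 2)) ^ 2 = (2 : ℝ) ^ d := by
    rw [← Real.rpow_natCast ((2 : ℝ) ^ ((d : ℝ) / 2)) 2,
      ← Real.rpow_mul (by norm_num : (0 : ℝ) ≤ 2)]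
    rw [Nat.cast_ofNat, div_mul_cancel₀ _ (two_ne_zero)]
    rw [Real.rpow_natCast]
  have hs : Real.sqrt ((2 : ℝ) ^ d)⁻¹ = ((2 : ℝ) ^ ((d : ℝ) / 2))⁻¹ := by
    rw [Real.sqrt_inv, ← hsq, Real.sqrt_sq htpos.le]
  rw [hs]
  push_cast
  rw [← hsq, sq]
  field_simp


end AddrExample
end
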